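/- Main theorem, degree 2 case: let x₁, x₂, z ∈ R with x₁-x₂ invertible, f₁(z) = (x₁-x₂)^{-1}(z-x₂), f₂(z) = (x₂-x₁)^{-1}(z-x₁). If z² = x₁²f₁(z) + x₂²f₂(z), then z^m = x₁^m f₁(z) + x₂^m f₂(z) for all m ≥ 0. -/
import Mathlib


/-- Main theorem, degree 2 case: with `f₁(z) = (x₁-x₂)⁻¹(z-x₂)`,
`f₂(z) = (x₂-x₁)⁻¹(z-x₁)`, if `z² = x₁²f₁(z) + x₂²f₂(z)` then
`z^m = x₁^m f₁(z) + x₂^m f₂(z)` for all `m ≥ 0`. -/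
theorem noncomm_spectral_decomposition_deg2 (R : Type*) [Ring R] (x1 x2 z : R)
    [Invertible (x1 - x2)] [Invertible (x2 - x1)]
    (h2 : z ^ 2 = x1 ^ 2 * (⅟(x1 - x2) * (z - x2)) + x2 ^ 2 * (⅟(x2 - x1) * (z - x1))) :
    ∀ m : ℕ,
      z ^ m = x1 ^ m * (⅟(x1 - x2) * (z - x2)) + x2 ^ m * (⅟(x2 - x1) * (z - x1)) := by
  have hneg : ⅟(x2 - x1) = -⅟(x1 - x2) := by
    apply invOf_eq_right_inv
    calc (x2 - x1) * -⅟(x1 - x2) = (x1 - x2) * ⅟(x1 - x2) := by noncomm_ring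
      _ = 1 := mul_invOf_self _
  set f1 : R := ⅟(x1 - x2) * (z - x2) with hf1def
  set f2 : R := ⅟(x2 - x1) * (z - x1) with hf2def
  -- degree 0 identity: f1 + f2 = 1
  have key0 : f1 + f2 = 1 := by
    rw [hf1def, hf2def, hneg]
    calc ⅟(x1 - x2) * (z - x2) + -⅟(x1 - x2) * (z - x1)
        = ⅟(x1 - x2) * (x1 - x2) := by noncomm_ring
      _ = 1 := invOf_mul_self _
  -- degree 1 identity: x1 * f1 + x2 * f2 = z
  have key1 : x1 * f1 + x2 * f2 = z := by
    rw [hf1def, hf2def, hneg]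
    have e1 : (x1 - x2) * (⅟(x1 - x2) * (z - x2)) = z - x2 := by
      rw [← mul_assoc, mul_invOf_self, one_mul]
    have e2 : x2 * (⅟(x1 - x2) * (x1 - x2)) = x2 := by
      rw [invOf_mul_self, mul_one]
    calc x1 * (⅟(x1 - x2) * (z - x2)) + x2 * (-⅟(x1 - x2) * (z - x1))
        = (x1 - x2) * (⅟(x1 - x2) * (z - x2)) + x2 * (⅟(x1 - x2) * (x1 - x2)) := by
          noncomm_ring
      _ = z - x2 + x2 := by rw [e1, e2]
      _ = z := by noncomm_ring
  -- key intertwining identities: f1 * z = x1 * f1, f2 * z = x2 * f2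
  have k1 : (x1 - x2) * (x1 * f1) = z ^ 2 - x2 * z := by
    have expand : (x1 - x2) * (x1 * f1) =
        (x1 ^ 2 * f1 + x2 ^ 2 * f2) - x2 * (x1 * f1 + x2 * f2) := by noncomm_ring
    rw [expand, key1, ← h2]
  have k2 : (x2 - x1) * (x2 * f2) = z ^ 2 - x1 * z := by
    have expand : (x2 - x1) * (x2 * f2) =
        (x1 ^ 2 * f1 + x2 ^ 2 * f2) - x1 * (x1 * f1 + x2 * f2) := by noncomm_ring
    rw [expand, key1, ← h2]
  have hz1 : f1 * z = x1 * f1 := by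
    have e : f1 * z = ⅟(x1 - x2) * ((x1 - x2) * (x1 * f1)) := by
      rw [k1, hf1def]; noncomm_ring
    rw [e, ← mul_assoc, invOf_mul_self, one_mul]
  have hz2 : f2 * z = x2 * f2 := by
    have e : f2 * z = ⅟(x2 - x1) * ((x2 - x1) * (x2 * f2)) := by
      rw [k2, hf2def]; noncomm_ring
    rw [e, ← mul_assoc, invOf_mul_self, one_mul]
  intro m
  induction m with
  | zero => simp [key0]
  | succ n ih =>
      rw [pow_succ, ih, add_mul, mul_assoc (x1 ^ n) f1 z, mul_assoc (x2 ^ n) f2 z, hz1, hz2,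
        pow_succ x1 n, pow_succ x2 n, mul_assoc (x1 ^ n) x1 f1, mul_assoc (x2 ^ n) x2 f2]
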